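/- For the matrix ODE Ṗ = −μ₀(1 − κ₀‖P⁻¹‖) P + YᵀY with P(0) ≥ κ₀ I, the solution satisfies P(t) ≥ κ₀ I for all t ≥ 0 (so that ‖P(t)⁻¹‖ ≤ 1/κ₀ and μ(t) ≥ 0). -/

import Mathlib

open Matrix
open scoped Matrix.Norms.L2Operator

noncomputable def E {k : ℕ} (v : Fin k → ℝ) : EuclideanSpace ℝ (Fin k) := (WithLp.equiv 2 _).symm v

variable {k : ℕ}

lemma inner_E (v w : Fin k → ℝ) : (inner ℝ (E v) (E w) : ℝ) = v ⬝ᵥ w := by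
  simp [E, PiLp.inner_apply, dotProduct, RCLike.inner_apply, mul_comm]

lemma normE_sq (v : Fin k → ℝ) : ‖E v‖ ^ 2 = v ⬝ᵥ v := by
  rw [← real_inner_self_eq_norm_sq, inner_E]

lemma dotSelf_nonneg (v : Fin k → ℝ) : 0 ≤ v ⬝ᵥ v := by rw [← normE_sq]; positivity

lemma herm_of_symm {A : Matrix (Fin k) (Fin k) ℝ} (h : Aᵀ = A) : A.IsHermitian := by
  rw [Matrix.IsHermitian, conjTranspose, h]; ext i j; simp

lemma normE_mulVec (A : Matrix (Fin k) (Fin k) ℝ) (v : Fin k → ℝ) :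
    ‖E (A *ᵥ v)‖ ≤ ‖A‖ * ‖E v‖ := A.l2_opNorm_mulVec (E v)

lemma dot_le_norm (A : Matrix (Fin k) (Fin k) ℝ) (v w : Fin k → ℝ) :
    v ⬝ᵥ (A *ᵥ w) ≤ ‖A‖ * (‖E v‖ * ‖E w‖) := by
  rw [← inner_E]
  calc (inner ℝ (E v) (E (A *ᵥ w)) : ℝ) ≤ ‖E v‖ * ‖E (A *ᵥ w)‖ := real_inner_le_norm _ _
    _ ≤ ‖E v‖ * (‖A‖ * ‖E w‖) := by
        exact mul_le_mul_of_nonneg_left (normE_mulVec A w) (norm_nonneg _)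
    _ = ‖A‖ * (‖E v‖ * ‖E w‖) := by ring

lemma opnorm_le (A : Matrix (Fin k) (Fin k) ℝ) (c : ℝ) (hc : 0 ≤ c)
    (h : ∀ v : Fin k → ℝ, ‖E (A *ᵥ v)‖ ≤ c * ‖E v‖) : ‖A‖ ≤ c := by
  rw [Matrix.l2_opNorm_def]
  exact ContinuousLinearMap.opNorm_le_bound _ hc fun x => h x

lemma dot_sq_le (u w : Fin k → ℝ) : (u ⬝ᵥ w) ^ 2 ≤ (u ⬝ᵥ u) * (w ⬝ᵥ w) := by
  rw [← inner_E, ← normE_sq, ← normE_sq]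
  calc (inner ℝ (E u) (E w) : ℝ) ^ 2 ≤ (‖E u‖ * ‖E w‖) ^ 2 := by
        have h := abs_real_inner_le_norm (E u) (E w)
        have := abs_nonneg (inner ℝ (E u) (E w) : ℝ)
        nlinarith [sq_abs (inner ℝ (E u) (E w) : ℝ)]
    _ = ‖E u‖ ^ 2 * ‖E w‖ ^ 2 := by ring

lemma dotSelf_pos {v : Fin k → ℝ} (hv : v ≠ 0) : 0 < v ⬝ᵥ v := by
  rcases (dotSelf_nonneg v).lt_or_eq with h | h
  · exact h
  · exfalso; apply hv
    have : ‖E v‖ = 0 := by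
      have := normE_sq v
      nlinarith [norm_nonneg (E v)]
    have : E v = 0 := norm_eq_zero.mp this
    have : v = 0 := by
      funext i; exact congrFun (congrArg (WithLp.equiv 2 _) this) i
    exact this

lemma symm_dot_move {M : Matrix (Fin k) (Fin k) ℝ} (hsym : Mᵀ = M) (x z : Fin k → ℝ) :
    x ⬝ᵥ (M *ᵥ z) = (M *ᵥ x) ⬝ᵥ z := by
  rw [dotProduct_mulVec, ← vecMul_transpose, hsym]

lemma key_lower {A : Matrix (Fin k) (Fin k) ℝ} {v : ℝ} (hv : 0 < v)
    (h : ∀ x, v * (x ⬝ᵥ x) ≤ x ⬝ᵥ (A *ᵥ x)) (x : Fin k → ℝ) :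
    v * ‖E x‖ ≤ ‖E (A *ᵥ x)‖ := by
  rcases eq_or_ne x 0 with rfl | hx
  · simp [E]
  · have h1 : v * (x ⬝ᵥ x) ≤ x ⬝ᵥ (A *ᵥ x) := h x
    have h2 : x ⬝ᵥ (A *ᵥ x) = (inner ℝ (E x) (E (A *ᵥ x)) : ℝ) := (inner_E _ _).symm
    have h3 : (inner ℝ (E x) (E (A *ᵥ x)) : ℝ) ≤ ‖E x‖ * ‖E (A *ᵥ x)‖ := real_inner_le_norm _ _
    have h4 : ‖E x‖ ^ 2 = x ⬝ᵥ x := normE_sq x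
    have h5 : 0 < ‖E x‖ := by
      have := dotSelf_pos hx; nlinarith [norm_nonneg (E x)]
    nlinarith

lemma isUnit_det_of_form {A : Matrix (Fin k) (Fin k) ℝ} {v : ℝ} (hv : 0 < v)
    (h : ∀ x, v * (x ⬝ᵥ x) ≤ x ⬝ᵥ (A *ᵥ x)) : IsUnit A.det := by
  rw [isUnit_iff_ne_zero]
  intro hdet
  obtain ⟨x, hx0, hx⟩ := (Matrix.exists_mulVec_eq_zero_iff).mpr hdet
  have := h x
  rw [hx] at this
  simp only [dotProduct_zero] at this
  have := dotSelf_pos hx0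
  nlinarith

lemma inv_opnorm_le_of_form {A : Matrix (Fin k) (Fin k) ℝ} {v : ℝ} (hv : 0 < v)
    (h : ∀ x, v * (x ⬝ᵥ x) ≤ x ⬝ᵥ (A *ᵥ x)) : ‖A⁻¹‖ ≤ 1 / v := by
  apply opnorm_le _ _ (by positivity)
  intro y
  have hdet := isUnit_det_of_form hv h
  have hAy : A *ᵥ (A⁻¹ *ᵥ y) = y := by
    rw [mulVec_mulVec, Matrix.mul_nonsing_inv _ hdet, one_mulVec]
  have := key_lower hv h (A⁻¹ *ᵥ y)
  rw [hAy] at this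
  rw [div_mul_eq_mul_div, le_div_iff₀ hv]
  linarith

lemma transpose_of_herm {A : Matrix (Fin k) (Fin k) ℝ} (h : A.IsHermitian) : Aᵀ = A := by
  conv_rhs => rw [← h]
  ext i j; simp [conjTranspose_apply]

lemma posdef_of_form {A : Matrix (Fin k) (Fin k) ℝ} (hsym : Aᵀ = A) {v : ℝ} (hv : 0 < v)
    (h : ∀ x, v * (x ⬝ᵥ x) ≤ x ⬝ᵥ (A *ᵥ x)) : A.PosDef := by
  refine PosDef.of_dotProduct_mulVec_pos (herm_of_symm hsym) fun x hx => ?_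
  have h1 := h x
  have h2 := dotSelf_pos hx
  simp only [star_trivial]
  nlinarith

open scoped MatrixOrder in
lemma inv_form_lower {A : Matrix (Fin k) (Fin k) ℝ} (hsym : Aᵀ = A) {v : ℝ} (hv : 0 < v)
    (h : ∀ x, v * (x ⬝ᵥ x) ≤ x ⬝ᵥ (A *ᵥ x)) (y : Fin k → ℝ) :
    (y ⬝ᵥ y) ^ 2 ≤ (y ⬝ᵥ (A *ᵥ y)) * (‖A⁻¹‖ * (y ⬝ᵥ y)) := by
  have hA : A.PosDef := posdef_of_form hsym hv h
  have hdet : IsUnit A.det := isUnit_det_of_form hv h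
  have hAinv : A⁻¹.PosDef := hA.inv
  set T := CFC.sqrt A⁻¹ with hT
  have hTT : T * T = A⁻¹ := CFC.sqrt_mul_sqrt_self A⁻¹ hAinv.posSemidef.nonneg
  have hTsym : Tᵀ = T := transpose_of_herm (CFC.sqrt_nonneg A⁻¹).posSemidef.1
  set a := A *ᵥ y with ha
  set b := T *ᵥ y with hb
  -- y ⬝ᵥ y = (T *ᵥ a) ⬝ᵥ b
  have e1 : (T *ᵥ a) ⬝ᵥ b = y ⬝ᵥ y := by
    rw [← symm_dot_move hTsym a b, hb, mulVec_mulVec, hTT, ha,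
      ← symm_dot_move hsym y (A⁻¹ *ᵥ y), mulVec_mulVec, Matrix.mul_nonsing_inv _ hdet,
      one_mulVec]
  have e2 : (T *ᵥ a) ⬝ᵥ (T *ᵥ a) = y ⬝ᵥ (A *ᵥ y) := by
    rw [← symm_dot_move hTsym a (T *ᵥ a), mulVec_mulVec, hTT, ha, mulVec_mulVec,
      Matrix.nonsing_inv_mul _ hdet, one_mulVec]
    exact dotProduct_comm _ _
  have e3 : b ⬝ᵥ b ≤ ‖A⁻¹‖ * (y ⬝ᵥ y) := by
    have : b ⬝ᵥ b = y ⬝ᵥ (A⁻¹ *ᵥ y) := by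
      rw [hb, ← symm_dot_move hTsym y (T *ᵥ y), mulVec_mulVec, hTT]
    rw [this]
    calc y ⬝ᵥ (A⁻¹ *ᵥ y) ≤ ‖A⁻¹‖ * (‖E y‖ * ‖E y‖) := dot_le_norm _ _ _
      _ = ‖A⁻¹‖ * (y ⬝ᵥ y) := by rw [← normE_sq]; ring_nf
  have cs := dot_sq_le (T *ᵥ a) b
  rw [e1, e2] at cs
  have hy0 : 0 ≤ y ⬝ᵥ (A *ᵥ y) := by have := h y; have := dotSelf_nonneg y; nlinarith
  calc (y ⬝ᵥ y)^2 ≤ (y ⬝ᵥ (A *ᵥ y)) * (b ⬝ᵥ b) := cs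
    _ ≤ (y ⬝ᵥ (A *ᵥ y)) * (‖A⁻¹‖ * (y ⬝ᵥ y)) := mul_le_mul_of_nonneg_left e3 hy0

noncomputable def qmin {k : ℕ} (A : Matrix (Fin k) (Fin k) ℝ) : ℝ :=
  sInf ((fun x => x ⬝ᵥ (A *ᵥ x)) '' {x | x ⬝ᵥ x = 1})

lemma sph_nonempty (hk : k ≠ 0) : {x : Fin k → ℝ | x ⬝ᵥ x = 1}.Nonempty := by
  haveI : NeZero k := ⟨hk⟩
  refine ⟨Pi.single 0 1, ?_⟩
  simp [dotProduct, Pi.single_apply]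

lemma normE_of_sph {x : Fin k → ℝ} (hx : x ⬝ᵥ x = 1) : ‖E x‖ = 1 := by
  have h := normE_sq x
  rw [hx] at h
  nlinarith [norm_nonneg (E x)]

lemma abs_form_le_of_sph (A : Matrix (Fin k) (Fin k) ℝ) {x : Fin k → ℝ} (hx : x ⬝ᵥ x = 1) :
    |x ⬝ᵥ (A *ᵥ x)| ≤ ‖A‖ := by
  rw [abs_le]
  constructor
  · have h := dot_le_norm (-A) x x
    rw [neg_mulVec, dotProduct_neg, normE_of_sph hx, norm_neg] at h
    simpa using by linarith
  · have h := dot_le_norm A x x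
    rw [normE_of_sph hx] at h
    simpa using h

lemma qmin_bdd (A : Matrix (Fin k) (Fin k) ℝ) :
    BddBelow ((fun x => x ⬝ᵥ (A *ᵥ x)) '' {x | x ⬝ᵥ x = 1}) := by
  refine ⟨-‖A‖, ?_⟩
  rintro r ⟨x, hx, rfl⟩
  have := abs_form_le_of_sph A hx
  rw [abs_le] at this
  exact this.1

lemma qmin_le {A : Matrix (Fin k) (Fin k) ℝ} {x : Fin k → ℝ} (hx : x ⬝ᵥ x = 1) :
    qmin A ≤ x ⬝ᵥ (A *ᵥ x) := csInf_le (qmin_bdd A) ⟨x, hx, rfl⟩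

lemma le_qmin (hk : k ≠ 0) {A : Matrix (Fin k) (Fin k) ℝ} {c : ℝ}
    (h : ∀ x : Fin k → ℝ, x ⬝ᵥ x = 1 → c ≤ x ⬝ᵥ (A *ᵥ x)) : c ≤ qmin A := by
  apply le_csInf ((sph_nonempty hk).image _)
  rintro r ⟨x, hx, rfl⟩
  exact h x hx

lemma exists_of_qmin_lt (hk : k ≠ 0) {A : Matrix (Fin k) (Fin k) ℝ} {c : ℝ}
    (h : qmin A < c) : ∃ x : Fin k → ℝ, x ⬝ᵥ x = 1 ∧ x ⬝ᵥ (A *ᵥ x) < c := by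
  obtain ⟨r, ⟨x, hx, rfl⟩, hr⟩ := exists_lt_of_csInf_lt ((sph_nonempty hk).image _) h
  exact ⟨x, hx, hr⟩

lemma qmin_lip (hk : k ≠ 0) (A B : Matrix (Fin k) (Fin k) ℝ) :
    qmin A ≤ qmin B + ‖A - B‖ := by
  rw [← sub_le_iff_le_add]
  apply le_qmin hk
  intro x hx
  have h1 : qmin A ≤ x ⬝ᵥ (A *ᵥ x) := qmin_le hx
  have h2 := abs_form_le_of_sph (A - B) hx
  rw [abs_le, sub_mulVec, dotProduct_sub] at h2
  linarith [h2.2]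

lemma le_form_of_le_qmin (hk : k ≠ 0) {A : Matrix (Fin k) (Fin k) ℝ} {c : ℝ}
    (h : c ≤ qmin A) (y : Fin k → ℝ) : c * (y ⬝ᵥ y) ≤ y ⬝ᵥ (A *ᵥ y) := by
  rcases eq_or_ne y 0 with rfl | hy
  · simp
  · have hyy := dotSelf_pos hy
    set r : ℝ := Real.sqrt (y ⬝ᵥ y) with hr
    have hr0 : 0 < r := Real.sqrt_pos.mpr hyy
    have hr2 : r ^ 2 = y ⬝ᵥ y := Real.sq_sqrt hyy.le
    set x : Fin k → ℝ := r⁻¹ • y with hxdef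
    have hx : x ⬝ᵥ x = 1 := by
      rw [hxdef, smul_dotProduct, dotProduct_smul, smul_eq_mul, smul_eq_mul, ← hr2]
      field_simp
    have h2 : qmin A ≤ x ⬝ᵥ (A *ᵥ x) := qmin_le hx
    rw [hxdef, smul_dotProduct, mulVec_smul, dotProduct_smul, smul_eq_mul, smul_eq_mul] at h2
    have : c ≤ r⁻¹ * (r⁻¹ * (y ⬝ᵥ (A *ᵥ y))) := le_trans h h2
    calc c * (y ⬝ᵥ y) ≤ (r⁻¹ * (r⁻¹ * (y ⬝ᵥ (A *ᵥ y)))) * (y ⬝ᵥ y) := by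
          exact mul_le_mul_of_nonneg_right this hyy.le
      _ = y ⬝ᵥ (A *ᵥ y) := by
          rw [← hr2]
          field_simp

noncomputable def quadL (x : Fin k → ℝ) : Matrix (Fin k) (Fin k) ℝ →L[ℝ] ℝ :=
  LinearMap.toContinuousLinearMap
    { toFun := fun A => x ⬝ᵥ (A *ᵥ x)
      map_add' := fun A B => by simp [add_mulVec, dotProduct_add]
      map_smul' := fun c A => by simp [smul_mulVec, dotProduct_smul] }

@[simp] lemma quadL_apply (x : Fin k → ℝ) (A : Matrix (Fin k) (Fin k) ℝ) :
    quadL x A = x ⬝ᵥ (A *ᵥ x) := rfl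

noncomputable def transL : Matrix (Fin k) (Fin k) ℝ →L[ℝ] Matrix (Fin k) (Fin k) ℝ :=
  LinearMap.toContinuousLinearMap
    { toFun := fun A => Aᵀ
      map_add' := fun A B => by simp [transpose_add]
      map_smul' := fun c A => by simp [transpose_smul] }

@[simp] lemma transL_apply (A : Matrix (Fin k) (Fin k) ℝ) : transL A = Aᵀ := rfl

lemma hasDerivAt_quad {P : ℝ → Matrix (Fin k) (Fin k) ℝ} {P' : Matrix (Fin k) (Fin k) ℝ}
    {t : ℝ} (x : Fin k → ℝ) (h : HasDerivAt P P' t) :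
    HasDerivAt (fun s => x ⬝ᵥ (P s *ᵥ x)) (x ⬝ᵥ (P' *ᵥ x)) t := by
  have := (quadL x).hasFDerivAt.comp_hasDerivAt t h
  simpa [Function.comp_def] using this

lemma hasDerivAt_transpose {P : ℝ → Matrix (Fin k) (Fin k) ℝ} {P' : Matrix (Fin k) (Fin k) ℝ}
    {t : ℝ} (h : HasDerivAt P P' t) :
    HasDerivAt (fun s => (P s)ᵀ) P'ᵀ t := by
  have := (transL (k := k)).hasFDerivAt.comp_hasDerivAt t h
  simpa [Function.comp_def] using this

open Set Topology in
/-- For Ṗ = −μ₀(1 − κ₀‖P⁻¹‖)P + YᵀY with P(0) ⪰ κ₀I, the bound P(t) ⪰ κ₀I persists for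
all t ≥ 0, whence ‖P(t)⁻¹‖ ≤ 1/κ₀ and μ(t) = μ₀(1 − κ₀‖P(t)⁻¹‖) ≥ 0. -/
theorem stmt5 {n nθ : ℕ} (κ₀ μ₀ : ℝ) (hκ₀ : 0 < κ₀) (hμ₀ : 0 < μ₀)
    (Y : ℝ → Matrix (Fin n) (Fin nθ) ℝ) (hYcont : Continuous Y)
    (P : ℝ → Matrix (Fin nθ) (Fin nθ) ℝ)
    (hode : ∀ t ≥ (0 : ℝ),
      HasDerivAt P (-(μ₀ * (1 - κ₀ * ‖(P t)⁻¹‖)) • P t + (Y t)ᵀ * Y t) t)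
    (hP0sym : (P 0).IsSymm)
    (hP0 : (P 0 - κ₀ • (1 : Matrix (Fin nθ) (Fin nθ) ℝ)).PosSemidef) :
    ∀ t ≥ (0 : ℝ),
      (P t - κ₀ • (1 : Matrix (Fin nθ) (Fin nθ) ℝ)).PosSemidef ∧
      ‖(P t)⁻¹‖ ≤ 1 / κ₀ ∧ 0 ≤ μ₀ * (1 - κ₀ * ‖(P t)⁻¹‖) := by
  classical
  rcases Nat.eq_zero_or_pos nθ with hk0 | hkpos
  · subst hk0
    intro t ht
    refine ⟨PosSemidef.of_dotProduct_mulVec_nonneg (Subsingleton.elim _ _) fun x => ?_, ?_, ?_⟩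
    · simp [dotProduct]
    · rw [Subsingleton.elim ((P t)⁻¹) 0, norm_zero]; positivity
    · rw [Subsingleton.elim ((P t)⁻¹) 0, norm_zero]; nlinarith
  have hk : nθ ≠ 0 := hkpos.ne'
  set m : ℝ → ℝ := fun t => qmin (P t) with hmdef
  have hPcont : ContinuousOn P (Ici (0:ℝ)) :=
    fun t ht => ((hode t ht).continuousAt).continuousWithinAt
  have hmcont : ContinuousOn m (Ici (0:ℝ)) := by
    have hlip : LipschitzWith 1 (qmin (k := nθ)) := by
      apply LipschitzWith.of_dist_le_mul
      intro A B
      rw [Real.dist_eq, dist_eq_norm, NNReal.coe_one, one_mul, abs_sub_le_iff]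
      constructor
      · linarith [qmin_lip hk A B]
      · have h := qmin_lip hk B A
        rw [norm_sub_rev] at h
        linarith
    exact hlip.continuous.comp_continuousOn hPcont
  have hm0 : κ₀ ≤ m 0 := by
    apply le_qmin hk
    intro x hx
    have h := hP0.dotProduct_mulVec_nonneg x
    simp only [star_trivial, sub_mulVec, dotProduct_sub, smul_mulVec, one_mulVec,
      dotProduct_smul, smul_eq_mul] at h
    rw [hx] at h
    linarith
  -- sign of μ below the threshold
  have hμ_le : ∀ t ≥ (0:ℝ), (P t)ᵀ = P t → 0 < m t → m t < κ₀ →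
      μ₀ * (1 - κ₀ * ‖(P t)⁻¹‖) ≤ 0 := by
    intro t ht hsym hmpos hmκ
    obtain ⟨x, hx1, hxlt⟩ := exists_of_qmin_lt hk hmκ
    have hform : ∀ y, m t * (y ⬝ᵥ y) ≤ y ⬝ᵥ (P t *ᵥ y) := le_form_of_le_qmin hk (le_refl _)
    have hlow := inv_form_lower hsym hmpos hform x
    rw [hx1] at hlow
    have hxpos : 0 < x ⬝ᵥ (P t *ᵥ x) := by
      have := hform x
      rw [hx1] at this
      nlinarith
    have hNnn : (0:ℝ) ≤ ‖(P t)⁻¹‖ := norm_nonneg _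
    have h1 : 1 ≤ κ₀ * ‖(P t)⁻¹‖ := by nlinarith
    nlinarith
  -- bound on |μ| above half the threshold
  have hμbound : ∀ t ≥ (0:ℝ), κ₀/2 ≤ m t → |μ₀ * (1 - κ₀ * ‖(P t)⁻¹‖)| ≤ μ₀ := by
    intro t ht hm
    have hform : ∀ y, (κ₀/2) * (y ⬝ᵥ y) ≤ y ⬝ᵥ (P t *ᵥ y) := le_form_of_le_qmin hk hm
    have hinv : ‖(P t)⁻¹‖ ≤ 1/(κ₀/2) := inv_opnorm_le_of_form (by positivity) hform
    have hNnn : (0:ℝ) ≤ ‖(P t)⁻¹‖ := norm_nonneg _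
    have h2 : κ₀ * ‖(P t)⁻¹‖ ≤ 2 := by
      rw [le_div_iff₀ (by positivity)] at hinv
      nlinarith
    rw [abs_le]
    constructor
    · nlinarith [mul_nonneg hμ₀.le (sub_nonneg.mpr h2)]
    · nlinarith [mul_nonneg hμ₀.le (mul_nonneg hκ₀.le hNnn)]
  -- symmetry propagation
  have hsymm : ∀ b ≥ (0:ℝ), (∀ s ∈ Icc (0:ℝ) b, κ₀/2 ≤ m s) →
      ∀ s ∈ Icc (0:ℝ) b, (P s)ᵀ = P s := by
    intro b hb hms
    have hDc : ContinuousOn (fun s => (P s)ᵀ - P s) (Icc (0:ℝ) b) :=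
      ((transL.continuous.comp_continuousOn (hPcont.mono Icc_subset_Ici_self)).sub
        (hPcont.mono Icc_subset_Ici_self))
    have hD' : ∀ s ∈ Ico (0:ℝ) b, HasDerivWithinAt (fun s => (P s)ᵀ - P s)
        (-(μ₀ * (1 - κ₀ * ‖(P s)⁻¹‖)) • ((P s)ᵀ - P s)) (Ici s) s := by
      intro s hs
      have h0 := hode s hs.1
      have h1 := (hasDerivAt_transpose h0).sub h0
      have h2 : (-(μ₀ * (1 - κ₀ * ‖(P s)⁻¹‖)) • P s + (Y s)ᵀ * Y s)ᵀ -
          (-(μ₀ * (1 - κ₀ * ‖(P s)⁻¹‖)) • P s + (Y s)ᵀ * Y s) =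
          -(μ₀ * (1 - κ₀ * ‖(P s)⁻¹‖)) • ((P s)ᵀ - P s) := by
        rw [transpose_add, transpose_smul, transpose_mul, transpose_transpose, smul_sub]
        abel
      rw [h2] at h1
      exact h1.hasDerivWithinAt
    have ha : ‖(P 0)ᵀ - P 0‖ ≤ 0 := by
      rw [show (P 0)ᵀ = P 0 from hP0sym, sub_self, norm_zero]
    have hbound : ∀ s ∈ Ico (0:ℝ) b,
        ‖-(μ₀ * (1 - κ₀ * ‖(P s)⁻¹‖)) • ((P s)ᵀ - P s)‖ ≤
          μ₀ * ‖(P s)ᵀ - P s‖ + 0 := by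
      intro s hs
      rw [norm_smul, Real.norm_eq_abs, abs_neg, add_zero]
      exact mul_le_mul_of_nonneg_right
        (hμbound s hs.1 (hms s ⟨hs.1, hs.2.le⟩)) (norm_nonneg _)
    intro s hs
    have hg := norm_le_gronwallBound_of_norm_deriv_right_le hDc hD' ha hbound s hs
    rw [gronwallBound_ε0_δ0] at hg
    have : (P s)ᵀ - P s = 0 := by
      have := norm_nonneg ((P s)ᵀ - P s)
      exact norm_eq_zero.mp (le_antisymm hg this)
    exact sub_eq_zero.mp this
  -- invariance of the lower bound
  have hinv : ∀ t ≥ (0:ℝ), κ₀ ≤ m t := by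
    intro t2 ht2
    by_contra hlt
    push_neg at hlt
    have hSne : ({s | s ∈ Icc (0:ℝ) t2 ∧ m s < κ₀}).Nonempty := ⟨t2, ⟨ht2, le_refl _⟩, hlt⟩
    have hSbd : BddBelow {s | s ∈ Icc (0:ℝ) t2 ∧ m s < κ₀} := ⟨0, fun s hs => hs.1.1⟩
    set τ := sInf {s | s ∈ Icc (0:ℝ) t2 ∧ m s < κ₀} with hτdef
    have hτ0 : 0 ≤ τ := le_csInf hSne (fun s hs => hs.1.1)
    have hτt2 : τ ≤ t2 := csInf_le hSbd ⟨⟨ht2, le_refl _⟩, hlt⟩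
    have hbefore : ∀ s, 0 ≤ s → s < τ → κ₀ ≤ m s := by
      intro s hs0 hsτ
      by_contra h
      push_neg at h
      exact absurd (csInf_le hSbd ⟨⟨hs0, hsτ.le.trans hτt2⟩, h⟩) (not_le.mpr hsτ)
    have hmτ : κ₀ ≤ m τ := by
      rcases eq_or_lt_of_le hτ0 with heq | hpos
      · rw [← heq]; exact hm0
      · by_contra h
        push_neg at h
        have hc : ContinuousWithinAt m (Ici (0:ℝ)) τ := hmcont τ hτ0
        have hev : m ⁻¹' (Iio κ₀) ∈ 𝓝[Ici (0:ℝ)] τ := hc (Iio_mem_nhds h)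
        have hev2 : m ⁻¹' (Iio κ₀) ∈ 𝓝[Ioo (0:ℝ) τ] τ :=
          nhdsWithin_mono τ (fun x hx => hx.1.le) hev
        have hne : (𝓝[Ioo (0:ℝ) τ] τ).NeBot := by
          rw [← mem_closure_iff_nhdsWithin_neBot, closure_Ioo hpos.ne]
          exact ⟨hτ0, le_refl τ⟩
        obtain ⟨s, hsm, hsIoo⟩ := (Filter.eventually_iff_exists_mem.mpr
          ⟨_, hev2, fun y hy => hy⟩).and self_mem_nhdsWithin |>.exists
        have : τ ≤ s := csInf_le hSbd ⟨⟨hsIoo.1.le, hsIoo.2.le.trans hτt2⟩, hsm⟩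
        exact absurd this (not_le.mpr hsIoo.2)
    have hcτ : ContinuousWithinAt m (Ici (0:ℝ)) τ := hmcont τ hτ0
    obtain ⟨δ, hδpos, hδ⟩ := Metric.continuousWithinAt_iff.mp hcτ (κ₀/2) (by positivity)
    obtain ⟨t2', ht2'a, ht2'b, ht2'c⟩ : ∃ u, τ < u ∧ u ≤ τ + δ/2 ∧ m u < κ₀ := by
      rcases le_or_gt t2 (τ + δ/2) with hcase | hcase
      · refine ⟨t2, lt_of_le_of_ne hτt2 ?_, hcase, hlt⟩
        intro he
        rw [he] at hmτ
        exact absurd hmτ (not_le.mpr hlt)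
      · by_contra hno
        push_neg at hno
        have hlb : τ + δ/2 ≤ τ := by
          apply le_csInf hSne
          intro s hs
          by_contra hs2
          push_neg at hs2
          rcases lt_trichotomy s τ with h1 | h1 | h1
          · exact absurd (hbefore s hs.1.1 h1) (not_le.mpr hs.2)
          · rw [h1] at hs; exact absurd hmτ (not_le.mpr hs.2)
          · exact absurd (hno s h1 hs2.le) (not_le.mpr hs.2)
        linarith
    have hmhalf : ∀ s, τ ≤ s → s ≤ t2' → κ₀/2 < m s := by
      intro s h1 h2
      have hs0 : s ∈ Ici (0:ℝ) := le_trans hτ0 h1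
      have hd : dist s τ < δ := by
        rw [Real.dist_eq, abs_of_nonneg (by linarith)]
        linarith
      have := hδ hs0 hd
      rw [Real.dist_eq, abs_lt] at this
      linarith
    have hv0 : 0 < max (κ₀/2) ((m t2' + κ₀)/2) := lt_max_of_lt_left (by positivity)
    have hvκ : max (κ₀/2) ((m t2' + κ₀)/2) < κ₀ := max_lt (by linarith) (by linarith)
    have hvt2' : m t2' < max (κ₀/2) ((m t2' + κ₀)/2) :=
      lt_of_lt_of_le (by linarith) (le_max_right _ _)
    set v := max (κ₀/2) ((m t2' + κ₀)/2) with hvdef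
    -- first crossing time of level v
    have hT : {s | s ∈ Icc τ t2' ∧ m s ≤ v} = Icc τ t2' ∩ m ⁻¹' (Iic v) := rfl
    have hTclosed : IsClosed {s | s ∈ Icc τ t2' ∧ m s ≤ v} := by
      rw [hT]
      exact (hmcont.mono (fun x hx => le_trans hτ0 hx.1)).preimage_isClosed_of_isClosed
        isClosed_Icc isClosed_Iic
    have hTne : ({s | s ∈ Icc τ t2' ∧ m s ≤ v}).Nonempty :=
      ⟨t2', ⟨ht2'a.le, le_refl _⟩, hvt2'.le⟩
    have hTbd : BddBelow {s | s ∈ Icc τ t2' ∧ m s ≤ v} := ⟨τ, fun s hs => hs.1.1⟩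
    set t3 := sInf {s | s ∈ Icc τ t2' ∧ m s ≤ v} with ht3def
    have ht3T : t3 ∈ {s | s ∈ Icc τ t2' ∧ m s ≤ v} := hTclosed.csInf_mem hTne hTbd
    have ht3τ : τ ≤ t3 := ht3T.1.1
    have ht3t2' : t3 ≤ t2' := ht3T.1.2
    have hmt3 : m t3 ≤ v := ht3T.2
    have hbefore3 : ∀ s, τ ≤ s → s < t3 → v < m s := by
      intro s h1 h2
      by_contra h
      push_neg at h
      exact absurd (csInf_le hTbd ⟨⟨h1, h2.le.trans ht3t2'⟩, h⟩) (not_le.mpr h2)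
    -- last time ≥ κ₀ before t3
    have hU : {s | s ∈ Icc τ t3 ∧ κ₀ ≤ m s} = Icc τ t3 ∩ m ⁻¹' (Ici κ₀) := rfl
    have hUclosed : IsClosed {s | s ∈ Icc τ t3 ∧ κ₀ ≤ m s} := by
      rw [hU]
      exact (hmcont.mono (fun x hx => le_trans hτ0 hx.1)).preimage_isClosed_of_isClosed
        isClosed_Icc isClosed_Ici
    have hUne : ({s | s ∈ Icc τ t3 ∧ κ₀ ≤ m s}).Nonempty := ⟨τ, ⟨le_refl _, ht3τ⟩, hmτ⟩
    have hUbd : BddAbove {s | s ∈ Icc τ t3 ∧ κ₀ ≤ m s} := ⟨t3, fun s hs => hs.1.2⟩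
    set σ := sSup {s | s ∈ Icc τ t3 ∧ κ₀ ≤ m s} with hσdef
    have hσU : σ ∈ {s | s ∈ Icc τ t3 ∧ κ₀ ≤ m s} := hUclosed.csSup_mem hUne hUbd
    have hστ : τ ≤ σ := hσU.1.1
    have hσ3 : σ ≤ t3 := hσU.1.2
    have hmσ : κ₀ ≤ m σ := hσU.2
    have hσ0 : (0:ℝ) ≤ σ := le_trans hτ0 hστ
    have hσlt : σ < t3 := by
      rcases lt_or_eq_of_le hσ3 with h | h
      · exact h
      · exfalso; rw [h] at hmσ; linarith
    have hafterσ : ∀ u, σ < u → u ≤ t3 → m u < κ₀ := by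
      intro u h1 h2
      by_contra hh
      push_neg at hh
      exact absurd (le_csSup hUbd ⟨⟨hστ.trans h1.le, h2⟩, hh⟩) (not_le.mpr h1)
    -- symmetry on [0, t3]
    have hsym3 : ∀ s ∈ Icc (0:ℝ) t3, (P s)ᵀ = P s := by
      apply hsymm t3 (le_trans hτ0 ht3τ)
      intro s hs
      rcases lt_or_ge s τ with h | h
      · exact le_trans (by linarith) (hbefore s hs.1 h)
      · exact (hmhalf s h (hs.2.trans ht3t2')).le
    -- monotonicity of the quadratic form on [σ, t3]
    have hmono : ∀ x : Fin nθ → ℝ, x ⬝ᵥ (P σ *ᵥ x) ≤ x ⬝ᵥ (P t3 *ᵥ x) := by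
      intro x
      have hsub : Icc σ t3 ⊆ Ici (0:ℝ) := fun u hu => le_trans hσ0 hu.1
      have hg : ContinuousOn (fun s => x ⬝ᵥ (P s *ᵥ x)) (Icc σ t3) := by
        have := (quadL x).continuous.comp_continuousOn (hPcont.mono hsub)
        simpa [Function.comp_def] using this
      have hg' : ∀ u ∈ interior (Icc σ t3), HasDerivWithinAt (fun s => x ⬝ᵥ (P s *ᵥ x))
          ((fun u => x ⬝ᵥ ((-(μ₀ * (1 - κ₀ * ‖(P u)⁻¹‖)) • P u + (Y u)ᵀ * Y u) *ᵥ x)) u)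
          (interior (Icc σ t3)) u := by
        intro u hu
        rw [interior_Icc] at hu
        exact (hasDerivAt_quad x (hode u (le_of_lt (lt_of_le_of_lt hσ0 hu.1)))).hasDerivWithinAt
      have hg'0 : ∀ u ∈ interior (Icc σ t3),
          0 ≤ (fun u => x ⬝ᵥ ((-(μ₀ * (1 - κ₀ * ‖(P u)⁻¹‖)) • P u + (Y u)ᵀ * Y u) *ᵥ x)) u := by
        intro u hu
        rw [interior_Icc] at hu
        have hu0 : (0:ℝ) ≤ u := le_of_lt (lt_of_le_of_lt hσ0 hu.1)
        have hmv : v < m u := hbefore3 u (hστ.trans hu.1.le) hu.2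
        have hμu : μ₀ * (1 - κ₀ * ‖(P u)⁻¹‖) ≤ 0 :=
          hμ_le u hu0 (hsym3 u ⟨hu0, hu.2.le.trans (le_refl t3)⟩)
            (lt_trans hv0 hmv) (hafterσ u hu.1 hu.2.le)
        have hform : 0 ≤ x ⬝ᵥ (P u *ᵥ x) := by
          have h1 := le_form_of_le_qmin hk (le_of_lt hmv) x
          have h2 := dotSelf_nonneg x
          have h3 : 0 ≤ v * (x ⬝ᵥ x) := mul_nonneg hv0.le h2
          linarith
        have hY : 0 ≤ x ⬝ᵥ (((Y u)ᵀ * Y u) *ᵥ x) := by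
          rw [← mulVec_mulVec, dotProduct_mulVec, vecMul_transpose]
          exact dotSelf_nonneg _
        simp only [add_mulVec, dotProduct_add, smul_mulVec, dotProduct_smul, smul_eq_mul]
        have h4 : 0 ≤ -(μ₀ * (1 - κ₀ * ‖(P u)⁻¹‖)) * (x ⬝ᵥ (P u *ᵥ x)) :=
          mul_nonneg (neg_nonneg.mpr hμu) hform
        linarith
      have hmono' := monotoneOn_of_hasDerivWithinAt_nonneg (convex_Icc σ t3) hg hg' hg'0
      exact hmono' ⟨le_refl σ, hσlt.le⟩ ⟨hσlt.le, le_refl t3⟩ hσlt.le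
    have hfinal : κ₀ ≤ m t3 := by
      apply le_qmin hk
      intro x hx
      have h1 : κ₀ ≤ x ⬝ᵥ (P σ *ᵥ x) := le_trans hmσ (qmin_le hx)
      exact le_trans h1 (hmono x)
    linarith
  -- conclusions
  intro t ht
  have hsymt : (P t)ᵀ = P t :=
    hsymm t ht (fun s hs => le_trans (by linarith) (hinv s hs.1)) t ⟨ht, le_refl t⟩
  have hform : ∀ y, κ₀ * (y ⬝ᵥ y) ≤ y ⬝ᵥ (P t *ᵥ y) := le_form_of_le_qmin hk (hinv t ht)
  have hninv : ‖(P t)⁻¹‖ ≤ 1/κ₀ := inv_opnorm_le_of_form hκ₀ hform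
  have hNnn : (0:ℝ) ≤ ‖(P t)⁻¹‖ := norm_nonneg _
  have hκN : κ₀ * ‖(P t)⁻¹‖ ≤ 1 := by
    rw [le_div_iff₀ hκ₀] at hninv
    nlinarith
  refine ⟨PosSemidef.of_dotProduct_mulVec_nonneg (herm_of_symm ?_) fun x => ?_, hninv, ?_⟩
  · rw [transpose_sub, hsymt, transpose_smul, transpose_one]
  · have h1 := hform x
    simp only [star_trivial, sub_mulVec, dotProduct_sub, smul_mulVec, one_mulVec,
      dotProduct_smul, smul_eq_mul]
    linarith
  · nlinarith
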